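/- For every β ∈ R one has Q(τ·β) = 2·Q(β); consequently, if α ∈ R is divisible by τ with α = τ·β, then Q(β) = Q(α)/2. -/

import Mathlib

open Polynomial

noncomputable def P (μ : ℤ) : ℤ[X] := X ^ 4 - C μ * X ^ 3 - C (2 * μ) * X + 4

noncomputable abbrev Rg (μ : ℤ) := AdjoinRoot (P μ)

noncomputable def tau (μ : ℤ) : Rg μ := AdjoinRoot.root (P μ)

noncomputable def Q (μ : ℤ) (α : Rg μ) : ℝ :=
  (1 / 2) * (((P μ).map (Int.castRingHom ℂ)).roots.attach.map
    (fun z => ‖AdjoinRoot.lift (Int.castRingHom ℂ) z.1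
      (by
        have h2 : Polynomial.eval z.1 ((P μ).map (Int.castRingHom ℂ)) = 0 :=
          (Polynomial.mem_roots'.mp z.2).2
        rwa [Polynomial.eval_map] at h2) α‖ ^ 2)).sum

lemma aux_real (m x : ℝ) (hm : m = 1 ∨ m = -1)
    (h : x ^ 4 - m * x ^ 3 - 2 * m * x + 4 = 0) : False := by
  rcases hm with rfl | rfl <;>
    nlinarith [sq_nonneg (x ^ 2 - x), sq_nonneg (x - 1), sq_nonneg x, sq_nonneg (x + 1),
      sq_nonneg (x ^ 2 - 1), sq_nonneg (x ^ 2 + x)]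

lemma aux_normSq (m : ℝ) (hm : m = 1 ∨ m = -1) (z : ℂ)
    (hz : z ^ 4 - (m : ℂ) * z ^ 3 - 2 * (m : ℂ) * z + 4 = 0) : Complex.normSq z = 2 := by
  have hz0 : z ≠ 0 := by rintro rfl; norm_num at hz
  have hn0 : Complex.normSq z ≠ 0 := by simpa using hz0
  set w : ℂ := z + 2 / z with hwdef
  have key : (w ^ 2 - (m : ℂ) * w - 4) * z ^ 2 = z ^ 4 - (m : ℂ) * z ^ 3 - 2 * (m : ℂ) * z + 4 := by
    rw [hwdef]
    field_simp
    ring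
  have hw : w ^ 2 - (m : ℂ) * w - 4 = 0 := by
    have := key.trans hz
    rcases mul_eq_zero.mp this with h | h
    · exact h
    · exact absurd h (pow_ne_zero _ hz0)
  have hre : w.re ^ 2 - w.im ^ 2 - m * w.re - 4 = 0 := by
    have := congrArg Complex.re hw
    simp [Complex.mul_re, Complex.mul_im, pow_two] at this
    nlinarith [this]
  have him' : 2 * w.re * w.im - m * w.im = 0 := by
    have := congrArg Complex.im hw
    simp [Complex.mul_re, Complex.mul_im, pow_two] at this
    nlinarith [this]
  have him : w.im = 0 := by
    by_contra hb
    have ha : 2 * w.re = m := by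
      have : w.im * (2 * w.re - m) = 0 := by linear_combination him'
      rcases mul_eq_zero.mp this with h | h
      · exact absurd h hb
      · linarith
    have ha2 : m * w.re = 2 * w.re ^ 2 := by rw [← ha]; ring
    nlinarith [hre, ha2, sq_nonneg w.im, sq_nonneg w.re]
  have hwim : w.im = z.im - 2 * z.im / Complex.normSq z := by
    simp [hwdef, Complex.div_im]
    ring
  have hfac : z.im * (Complex.normSq z - 2) = 0 := by
    have h1 : z.im - 2 * z.im / Complex.normSq z = 0 := by rw [← hwim]; exact him
    field_simp at h1
    nlinarith [h1]
  rcases mul_eq_zero.mp hfac with hy | hn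
  · exfalso
    have hzr : z = (z.re : ℂ) := Complex.ext rfl (by simp [hy])
    rw [hzr] at hz
    have hzre : z.re ^ 4 - m * z.re ^ 3 - 2 * m * z.re + 4 = 0 := by exact_mod_cast hz
    exact aux_real m z.re hm hzre
  · linarith

noncomputable def phi (μ : ℤ) (z : {x // x ∈ ((P μ).map (Int.castRingHom ℂ)).roots}) :
    Rg μ →+* ℂ :=
  AdjoinRoot.lift (Int.castRingHom ℂ) z.1
    (by
      have h2 : Polynomial.eval z.1 ((P μ).map (Int.castRingHom ℂ)) = 0 :=
        (Polynomial.mem_roots'.mp z.2).2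
      rwa [Polynomial.eval_map] at h2)

lemma Q_eq (μ : ℤ) (α : Rg μ) :
    Q μ α = (1 / 2) * (((P μ).map (Int.castRingHom ℂ)).roots.attach.map
      (fun z => ‖phi μ z α‖ ^ 2)).sum := rfl

lemma phi_root (μ : ℤ) (z : {x // x ∈ ((P μ).map (Int.castRingHom ℂ)).roots}) :
    phi μ z (tau μ) = z.1 := AdjoinRoot.lift_root _

lemma root_eq (μ : ℤ) (z : {x // x ∈ ((P μ).map (Int.castRingHom ℂ)).roots}) :
    z.1 ^ 4 - ((μ : ℝ) : ℂ) * z.1 ^ 3 - 2 * ((μ : ℝ) : ℂ) * z.1 + 4 = 0 := by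
  have h2 : Polynomial.eval z.1 ((P μ).map (Int.castRingHom ℂ)) = 0 :=
    (Polynomial.mem_roots'.mp z.2).2
  rw [Polynomial.eval_map] at h2
  simp only [P, eval₂_sub, eval₂_add, eval₂_mul, eval₂_pow, eval₂_X, eval₂_C,
    eval₂_ofNat] at h2
  simp only [eq_intCast] at h2
  push_cast at h2 ⊢
  linear_combination h2

/-- Multiplication by `τ` doubles the squared norm: `Q(τ·β) = 2·Q(β)`; consequently
if `α = τ·β` then `Q(β) = Q(α)/2`. -/
theorem stmt14 (μ : ℤ) (hμ : μ = 1 ∨ μ = -1) :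
    (∀ β : Rg μ, Q μ (tau μ * β) = 2 * Q μ β) ∧
    (∀ α β : Rg μ, α = tau μ * β → Q μ β = Q μ α / 2) := by
  have hμ' : ((μ : ℝ) = 1 ∨ (μ : ℝ) = -1) := by rcases hμ with rfl | rfl <;> norm_num
  have hmain : ∀ β : Rg μ, Q μ (tau μ * β) = 2 * Q μ β := by
    intro β
    rw [Q_eq, Q_eq]
    have hpt : ∀ z ∈ ((P μ).map (Int.castRingHom ℂ)).roots.attach,
        ‖phi μ z (tau μ * β)‖ ^ 2 = 2 * ‖phi μ z β‖ ^ 2 := by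
      intro z _
      have hns : Complex.normSq z.1 = 2 := aux_normSq (μ : ℝ) hμ' z.1 (root_eq μ z)
      have hnorm : ‖z.1‖ ^ 2 = 2 := by rw [← Complex.normSq_eq_norm_sq, hns]
      rw [map_mul, phi_root, norm_mul, mul_pow, hnorm]
    rw [Multiset.map_congr rfl hpt, Multiset.sum_map_mul_left]
    ring
  refine ⟨hmain, fun α β h => ?_⟩
  rw [h, hmain β]
  ring
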